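/- Fix ℓ > 0 and b₁, b₂ > 0, q₁, q₂ ∈ ℝ, and set Bⱼ = D(bⱼ)·S(qⱼ) = [[bⱼ, 0], [qⱼ/bⱼ, 1/bⱼ]]. If the (1,1) entry of the commutator [B₁·T(w², ℓ), B₂·T(w², ℓ)] vanishes for all w > 0, then b₁ = b₂ and q₁ = q₂. -/

import Mathlib

open Real Matrix

noncomputable def freeMonodromy (E ℓ : ℝ) : Matrix (Fin 2) (Fin 2) ℝ :=
  !![Real.cos (Real.sqrt E * ℓ), Real.sin (Real.sqrt E * ℓ) / Real.sqrt E;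
     -(Real.sqrt E * Real.sin (Real.sqrt E * ℓ)), Real.cos (Real.sqrt E * ℓ)]

noncomputable def lowerTri (b q : ℝ) : Matrix (Fin 2) (Fin 2) ℝ :=
  !![b, 0; q / b, 1 / b]

theorem equal_length_lower_triangular_case (ℓ b₁ b₂ q₁ q₂ : ℝ)
    (hℓ : ℓ > 0) (hb₁ : b₁ > 0) (hb₂ : b₂ > 0)
    (h : ∀ w : ℝ, w > 0 →
      ((lowerTri b₁ q₁ * freeMonodromy (w ^ 2) ℓ) * (lowerTri b₂ q₂ * freeMonodromy (w ^ 2) ℓ)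
        - (lowerTri b₂ q₂ * freeMonodromy (w ^ 2) ℓ) * (lowerTri b₁ q₁ * freeMonodromy (w ^ 2) ℓ)) 0 0
        = 0) :
    b₁ = b₂ ∧ q₁ = q₂ := by
  have hℓ' : ℓ ≠ 0 := ne_of_gt hℓ
  have hb₁' : b₁ ≠ 0 := ne_of_gt hb₁
  have hb₂' : b₂ ≠ 0 := ne_of_gt hb₂
  have hpi : (0:ℝ) < π := Real.pi_pos
  -- first specialization: w = π/(2ℓ)
  have hw1 : (π / (2 * ℓ)) > 0 := by positivity
  have h1 := h (π / (2 * ℓ)) hw1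
  have hs1 : Real.sqrt ((π / (2 * ℓ)) ^ 2) = π / (2 * ℓ) := Real.sqrt_sq (le_of_lt hw1)
  have hprod1 : (π / (2 * ℓ)) * ℓ = π / 2 := by field_simp
  rw [freeMonodromy, hs1, hprod1, Real.cos_pi_div_two, Real.sin_pi_div_two] at h1
  simp [lowerTri, Matrix.mul_apply, Fin.sum_univ_two] at h1
  field_simp at h1
  have hbeq : b₁ = b₂ := by
    have hsq : (b₂ - b₁) * ((b₂ + b₁) * (2 * ℓ)^2) = 0 := by linear_combination (4*ℓ^2) * h1
    have h2ne : (b₂ + b₁) * (2 * ℓ)^2 ≠ 0 := by positivity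
    have := (mul_eq_zero.mp hsq).resolve_right h2ne
    linarith
  refine ⟨hbeq, ?_⟩
  subst hbeq
  clear h1
  -- second specialization: w = π/(4ℓ)
  have hw2 : (π / (4 * ℓ)) > 0 := by positivity
  have h2 := h (π / (4 * ℓ)) hw2
  have hs2 : Real.sqrt ((π / (4 * ℓ)) ^ 2) = π / (4 * ℓ) := Real.sqrt_sq (le_of_lt hw2)
  have hprod2 : (π / (4 * ℓ)) * ℓ = π / 4 := by field_simp
  rw [freeMonodromy, hs2, hprod2, Real.cos_pi_div_four, Real.sin_pi_div_four] at h2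
  simp [lowerTri, Matrix.mul_apply, Fin.sum_univ_two] at h2
  have hsqrt2 : Real.sqrt 2 > 0 := by positivity
  have hsq2 : Real.sqrt 2 * Real.sqrt 2 = 2 := Real.mul_self_sqrt (by norm_num)
  field_simp at h2
  have hq : (q₂ - q₁) * (b₁^2 * ℓ^2 * 64) = 0 := by
    linear_combination (8*b₁^2*ℓ) * h2 - 32 * (q₂ - q₁) * b₁^2 * ℓ^2 * hsq2
  have hne : b₁^2 * ℓ^2 * 64 ≠ 0 := by positivity
  have := (mul_eq_zero.mp hq).resolve_right hne
  linarith
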